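/- For every k ∈ ℤ and all λ, μ > u, the A₁ period functions satisfy (−1)^{k+1} · I⁽ᵏ⁺¹⁾(λ) · I⁽⁻¹⁻ᵏ⁾(μ) = 2 · (λ−u)^{−k−3/2} · (μ−u)^{k+1/2}. (Summing over k ∈ ℤ, this family of identities expresses the symplectic pairing Ω(φ_{A₁}(u,λ;z), f_{A₁}(u,μ;z)) = Σ_{k∈ℤ} (−1)^{k+1} I⁽ᵏ⁺¹⁾(λ) I⁽⁻¹⁻ᵏ⁾(μ) as 2 (μ−u)^{1/2} (λ−u)^{−1/2} δ(λ−u, μ−u), where δ(x,y) = Σ_{n∈ℤ} x^n y^{−n−1} is the formal delta-function; this is the key identity in the proof of Lemma 4.3 of the paper.) -/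
import Mathlib


/-!
The period vectors of the A₁ singularity F(u,x) = x²/2 + u:
I⁽ᵏ⁾(λ) = (−1)^k (2k−1)!! 2^{1/2−k} (λ−u)^{−k−1/2} for k ≥ 0, and
I⁽⁻ᵏ⁻¹⁾(λ) = 2^{k+3/2} ((2k+1)!!)⁻¹ (λ−u)^{k+1/2} for k ≥ 0.
The family of identities
(−1)^{k+1} I⁽ᵏ⁺¹⁾(λ) I⁽⁻¹⁻ᵏ⁾(μ) = 2 (λ−u)^{−k−3/2} (μ−u)^{k+1/2}, k ∈ ℤ,
expresses Ω(φ_{A₁}(u,λ;z), f_{A₁}(u,μ;z)) as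
2 (μ−u)^{1/2} (λ−u)^{−1/2} δ(λ−u, μ−u), the key identity in Lemma 4.3.
-/

/-- The A₁ period function I⁽ᵏ⁾, k ∈ ℤ. -/
noncomputable def periodA1 (u : ℝ) (k : ℤ) (lam : ℝ) : ℝ :=
  if 0 ≤ k then
    (-1 : ℝ) ^ k.toNat * (Nat.doubleFactorial (2 * k.toNat - 1) : ℝ) *
      (2 : ℝ) ^ ((1 : ℝ) / 2 - (k.toNat : ℝ)) *
      (lam - u) ^ (-(k.toNat : ℝ) - 1 / 2)
  else
    (2 : ℝ) ^ (((-k - 1).toNat : ℝ) + 3 / 2) /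
      (Nat.doubleFactorial (2 * (-k - 1).toNat + 1) : ℝ) *
      (lam - u) ^ (((-k - 1).toNat : ℝ) + 1 / 2)

lemma key1 (s D a b X Y : ℝ) (hs : s * s = 1) (hab : a * b = 2) (hD : D ≠ 0) :
    s * (s * D * a * X) * (b / D * Y) = 2 * X * Y := by
  have h : s * (s * D * a * X) * (b / D * Y) = (s * s) * (a * b) * (D / D) * X * Y := by
    ring
  rw [h, hs, hab, div_self hD]; ring

lemma key2 (s D a b X Y : ℝ) (hs : s * s = 1) (hab : a * b = 2) (hD : D ≠ 0) :
    s * (b / D * X) * (s * D * a * Y) = 2 * X * Y := by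
  have h : s * (b / D * X) * (s * D * a * Y) = (s * s) * (a * b) * (D / D) * X * Y := by
    ring
  rw [h, hs, hab, div_self hD]; ring

/-- For every k ∈ ℤ and λ, μ > u:
(−1)^{k+1} I⁽ᵏ⁺¹⁾(λ) I⁽⁻¹⁻ᵏ⁾(μ) = 2 (λ−u)^{−k−3/2} (μ−u)^{k+1/2}. -/
theorem periodA1_delta_identity (u : ℝ) (k : ℤ) (lam mu : ℝ)
    (hlam : u < lam) (hmu : u < mu) :
    (-1 : ℝ) ^ (k + 1) * periodA1 u (k + 1) lam * periodA1 u (-1 - k) mu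
      = 2 * (lam - u) ^ (-(k : ℝ) - 3 / 2) * (mu - u) ^ ((k : ℝ) + 1 / 2) := by
  have hx : (0:ℝ) < lam - u := by linarith
  have hy : (0:ℝ) < mu - u := by linarith
  have h2 : (0:ℝ) < 2 := by norm_num
  rcases le_or_gt 0 k with hk | hk
  · -- k ≥ 0
    obtain ⟨n, rfl⟩ : ∃ n : ℕ, k = (n : ℤ) := ⟨k.toNat, by omega⟩
    have hp1 : (0:ℤ) ≤ (n:ℤ) + 1 := by omega
    have hp2 : ¬ (0:ℤ) ≤ -1 - (n:ℤ) := by omega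
    simp only [periodA1, if_pos hp1, if_neg hp2]
    have ht1 : ((n:ℤ) + 1).toNat = n + 1 := by omega
    have ht2 : (-(-1 - (n:ℤ)) - 1).toNat = n := by omega
    rw [ht1, ht2]
    have hd1 : 2 * (n + 1) - 1 = 2 * n + 1 := by omega
    rw [hd1]
    have hz : ((-1:ℝ) ^ ((n:ℤ) + 1)) = (-1:ℝ) ^ (n + 1) := by
      rw [show (n:ℤ) + 1 = ((n + 1 : ℕ) : ℤ) by push_cast; ring, zpow_natCast]
    rw [hz]
    have hX : (lam - u) ^ (-((n + 1 : ℕ) : ℝ) - 1 / 2)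
        = (lam - u) ^ (-((n:ℤ) : ℝ) - 3 / 2) := by
      congr 1; push_cast; ring
    have hY : (mu - u) ^ ((n : ℝ) + 1 / 2) = (mu - u) ^ (((n:ℤ) : ℝ) + 1 / 2) := by
      congr 1
    rw [hX, hY]
    refine key1 _ _ _ _ _ _ ?_ ?_ ?_
    · rw [← pow_add]
      exact Even.neg_one_pow ⟨n + 1, rfl⟩
    · rw [← Real.rpow_add h2]
      rw [show (1:ℝ)/2 - ((n+1:ℕ):ℝ) + ((n:ℝ) + 3/2) = 1 by push_cast; ring,
        Real.rpow_one]
    · exact_mod_cast (Nat.doubleFactorial_pos (2 * n + 1)).ne'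
  · rcases eq_or_lt_of_le (by omega : k ≤ -1) with hk1 | hk1
    · -- k = -1
      subst hk1
      norm_num [periodA1]
      have h12 : (2:ℝ) ^ ((1:ℝ)/2) * (2:ℝ) ^ ((1:ℝ)/2) = 2 := by
        rw [← Real.rpow_add h2]; norm_num
      linear_combination ((lam - u) ^ (-(1/2:ℝ)) * (mu - u) ^ (-(1/2:ℝ))) * h12
    · -- k ≤ -2
      obtain ⟨m, rfl⟩ : ∃ m : ℕ, k = -2 - (m : ℤ) := ⟨(-k - 2).toNat, by omega⟩
      have hp1 : ¬ (0:ℤ) ≤ (-2 - (m:ℤ)) + 1 := by omega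
      have hp2 : (0:ℤ) ≤ -1 - (-2 - (m:ℤ)) := by omega
      simp only [periodA1, if_neg hp1, if_pos hp2]
      have ht1 : (-((-2 - (m:ℤ)) + 1) - 1).toNat = m := by omega
      have ht2 : (-1 - (-2 - (m:ℤ))).toNat = m + 1 := by omega
      rw [ht1, ht2]
      have hd1 : 2 * (m + 1) - 1 = 2 * m + 1 := by omega
      rw [hd1]
      have hz : ((-1:ℝ) ^ ((-2 - (m:ℤ)) + 1)) = (-1:ℝ) ^ (m + 1) := by
        rw [show (-2 - (m:ℤ)) + 1 = -((m + 1 : ℕ) : ℤ) by push_cast; ring,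
          zpow_neg, zpow_natCast, ← inv_pow]
        norm_num
      rw [hz]
      have hX : (lam - u) ^ ((m : ℝ) + 1 / 2)
          = (lam - u) ^ (-((((-2 - (m:ℤ)) : ℤ)) : ℝ) - 3 / 2) := by
        congr 1; push_cast; try ring
      have hY : (mu - u) ^ (-((m + 1 : ℕ) : ℝ) - 1 / 2)
          = (mu - u) ^ ((((-2 - (m:ℤ)) : ℤ) : ℝ) + 1 / 2) := by
        congr 1; push_cast; try ring
      rw [hX, hY]
      refine key2 _ _ _ _ _ _ ?_ ?_ ?_
      · rw [← pow_add]
        exact Even.neg_one_pow ⟨m + 1, rfl⟩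
      · rw [← Real.rpow_add h2]
        rw [show (1:ℝ)/2 - ((m+1:ℕ):ℝ) + ((m:ℝ) + 3/2) = 1 by push_cast; ring,
          Real.rpow_one]
      · exact_mod_cast (Nat.doubleFactorial_pos (2 * m + 1)).ne'
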